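/- arXiv:2511.18176 — 5 statements merged into one kernel-verified Lean document; each statement's English description precedes it below -/
import Mathlib

section
/- Let S₁, S₂ ⊆ ℝⁿ be closed convex cones. Then the negative polar cone of their intersection equals the closure of the sum of their negative polar cones: (S₁ ∩ S₂)° = cl(S₁° + S₂°). -/
open Pointwise

/-- Negative polar cone. -/
def negPolar {n : ℕ} (S : Set (EuclideanSpace ℝ (Fin n))) : Set (EuclideanSpace ℝ (Fin n)) :=
  {u | ∀ x ∈ S, (inner ℝ u x : ℝ) ≤ 0}

lemma zero_mem_negPolar {n : ℕ} (S : Set (EuclideanSpace ℝ (Fin n))) : (0 : EuclideanSpace ℝ (Fin n)) ∈ negPolar S := by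
  intro x hx; rw [inner_zero_left]

lemma negPolar_anti {n : ℕ} {S T : Set (EuclideanSpace ℝ (Fin n))} (h : S ⊆ T) :
    negPolar T ⊆ negPolar S := fun u hu x hx => hu x (h hx)

lemma isClosed_negPolar {n : ℕ} (S : Set (EuclideanSpace ℝ (Fin n))) : IsClosed (negPolar S) := by
  have : negPolar S = ⋂ x ∈ S, {u : EuclideanSpace ℝ (Fin n) | (inner ℝ u x : ℝ) ≤ 0} := by
    ext u; simp [negPolar]
  rw [this]
  exact isClosed_biInter fun x _ =>
    isClosed_le (Continuous.inner continuous_id continuous_const) continuous_const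

lemma negPolar_closure {n : ℕ} (S : Set (EuclideanSpace ℝ (Fin n))) :
    negPolar (closure S) = negPolar S := by
  apply le_antisymm (negPolar_anti subset_closure)
  intro u hu x hx
  have hcl : closure S ⊆ {x : EuclideanSpace ℝ (Fin n) | (inner ℝ u x : ℝ) ≤ 0} := by
    apply closure_minimal (fun y hy => hu y hy)
    have : Continuous fun y : EuclideanSpace ℝ (Fin n) => (inner ℝ u y : ℝ) :=
      Continuous.inner continuous_const continuous_id
    exact isClosed_le this continuous_const
  exact hcl hx

lemma negPolar_add {n : ℕ} (A B : Set (EuclideanSpace ℝ (Fin n)))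
    (hA : (0 : EuclideanSpace ℝ (Fin n)) ∈ A) (hB : (0 : EuclideanSpace ℝ (Fin n)) ∈ B) :
    negPolar (A + B) = negPolar A ∩ negPolar B := by
  ext u
  constructor
  · intro hu
    constructor
    · intro a ha
      have : a + 0 ∈ A + B := Set.add_mem_add ha hB
      simpa using hu _ this
    · intro b hb
      have : 0 + b ∈ A + B := Set.add_mem_add hA hb
      simpa using hu _ this
  · rintro ⟨h₁, h₂⟩ x hx
    obtain ⟨a, ha, b, hb, rfl⟩ := hx
    rw [inner_add_right]
    exact add_nonpos (h₁ a ha) (h₂ b hb)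

/-- Bipolar theorem for negPolar. -/
lemma negPolar_negPolar {n : ℕ} (S : Set (EuclideanSpace ℝ (Fin n)))
    (hne : S.Nonempty) (hc : IsClosed S) (hconv : Convex ℝ S)
    (hcone : ∀ t : ℝ, 0 ≤ t → ∀ x ∈ S, t • x ∈ S) :
    negPolar (negPolar S) = S := by
  -- build the convex cone with carrier S
  let K : ConvexCone ℝ (EuclideanSpace ℝ (Fin n)) :=
    { carrier := S
      smul_mem' := fun c hc x hx => hcone c (le_of_lt hc) x hx
      add_mem' := fun x hx y hy => by
        have h2 : (2 : ℝ) • ((1/2 : ℝ) • x + (1/2 : ℝ) • y) ∈ S := by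
          apply hcone 2 (by norm_num)
          exact hconv hx hy (by norm_num) (by norm_num) (by norm_num)
        have : (2 : ℝ) • ((1/2 : ℝ) • x + (1/2 : ℝ) • y) = x + y := by
          rw [smul_add, smul_smul, smul_smul]; norm_num
        rwa [this] at h2 }
  apply le_antisymm
  · intro v hv
    by_contra hvS
    let P : ProperCone ℝ (EuclideanSpace ℝ (Fin n)) :=
      { carrier := S
        add_mem' := fun hx hy => K.add_mem' hx hy
        zero_mem' := by
          obtain ⟨x, hx⟩ := hne
          simpa using hcone 0 le_rfl x hx
        smul_mem' := fun c x hx => by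
          show (c : ℝ) • x ∈ S
          exact hcone c c.2 x hx
        isClosed' := hc }
    obtain ⟨y, hy, hyv⟩ :=
      P.hyperplane_separation' (x₀ := v) hvS
    rw [real_inner_comm] at hyv
    have hmy : -y ∈ negPolar S := by
      intro x hx
      have := hy x hx
      rw [inner_neg_left, real_inner_comm]
      linarith
    have := hv _ hmy
    rw [inner_neg_right, real_inner_comm] at this
    linarith
  · intro x hx u hu
    have := hu x hx
    rwa [real_inner_comm]

theorem stmt_1 {n : ℕ} (S₁ S₂ : Set (EuclideanSpace ℝ (Fin n)))
    (hS₁c : IsClosed S₁) (hS₂c : IsClosed S₂)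
    (hS₁conv : Convex ℝ S₁) (hS₂conv : Convex ℝ S₂)
    (hS₁cone : ∀ t : ℝ, 0 ≤ t → ∀ x ∈ S₁, t • x ∈ S₁)
    (hS₂cone : ∀ t : ℝ, 0 ≤ t → ∀ x ∈ S₂, t • x ∈ S₂) :
    negPolar (S₁ ∩ S₂) = closure (negPolar S₁ + negPolar S₂) := by
  set A := negPolar S₁ with hA
  set B := negPolar S₂ with hB
  have h0A : (0 : EuclideanSpace ℝ (Fin n)) ∈ A := zero_mem_negPolar S₁
  have h0B : (0 : EuclideanSpace ℝ (Fin n)) ∈ B := zero_mem_negPolar S₂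
  -- handle empty cases
  rcases S₁.eq_empty_or_nonempty with rfl | hS₁ne
  · have hA' : A = Set.univ := by
      ext u; simp [hA, negPolar]
    have : A + B = Set.univ := by
      apply Set.eq_univ_of_forall
      intro u
      have : u + 0 ∈ A + B := Set.add_mem_add (hA' ▸ Set.mem_univ u) h0B
      simpa using this
    rw [this, closure_univ, Set.empty_inter]
    ext u; simp [negPolar]
  rcases S₂.eq_empty_or_nonempty with rfl | hS₂ne
  · have hB' : B = Set.univ := by
      ext u; simp [hB, negPolar]
    have : A + B = Set.univ := by
      apply Set.eq_univ_of_forall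
      intro u
      have : 0 + u ∈ A + B := Set.add_mem_add h0A (hB' ▸ Set.mem_univ u)
      simpa using this
    rw [this, closure_univ, Set.inter_empty]
    ext u; simp [negPolar]
  -- nonempty case
  have h0S₁ : (0 : EuclideanSpace ℝ (Fin n)) ∈ S₁ := by
    obtain ⟨x, hx⟩ := hS₁ne
    simpa using hS₁cone 0 le_rfl x hx
  have h0S₂ : (0 : EuclideanSpace ℝ (Fin n)) ∈ S₂ := by
    obtain ⟨x, hx⟩ := hS₂ne
    simpa using hS₂cone 0 le_rfl x hx
  set C := closure (A + B) with hC
  -- C is a nonempty closed convex cone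
  have hCne : C.Nonempty := ⟨0, subset_closure (by simpa using Set.add_mem_add h0A h0B)⟩
  have hCc : IsClosed C := isClosed_closure
  have hABconv : Convex ℝ (A + B) := by
    apply Convex.add
    · intro u hu w hw a b ha hb hab x hx
      rw [inner_add_left, real_inner_smul_left, real_inner_smul_left]
      have h1 := hu x hx
      have h2 := hw x hx
      nlinarith
    · intro u hu w hw a b ha hb hab x hx
      rw [inner_add_left, real_inner_smul_left, real_inner_smul_left]
      have h1 := hu x hx
      have h2 := hw x hx
      nlinarith
  have hCconv : Convex ℝ C := hABconv.closure
  have hABcone : ∀ t : ℝ, 0 ≤ t → ∀ x ∈ A + B, t • x ∈ A + B := by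
    rintro t ht x ⟨a, ha, b, hb, rfl⟩
    rw [smul_add]
    apply Set.add_mem_add
    · intro y hy
      rw [real_inner_smul_left]
      exact mul_nonpos_of_nonneg_of_nonpos ht (ha y hy)
    · intro y hy
      rw [real_inner_smul_left]
      exact mul_nonpos_of_nonneg_of_nonpos ht (hb y hy)
  have hCcone : ∀ t : ℝ, 0 ≤ t → ∀ x ∈ C, t • x ∈ C := by
    intro t ht x hx
    have hmaps : Set.MapsTo (fun y : EuclideanSpace ℝ (Fin n) => t • y) (A + B) (A + B) :=
      fun y hy => hABcone t ht y hy
    exact (hmaps.closure (continuous_const_smul t)) hx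
  -- negPolar C = S₁ ∩ S₂
  have hpC : negPolar C = S₁ ∩ S₂ := by
    rw [hC, negPolar_closure, negPolar_add A B h0A h0B,
      negPolar_negPolar S₁ hS₁ne hS₁c hS₁conv hS₁cone,
      negPolar_negPolar S₂ hS₂ne hS₂c hS₂conv hS₂cone]
  have := negPolar_negPolar C hCne hCc hCconv hCcone
  rw [hpC] at this
  exact this
end

section
/- If a closed set S ⊆ ℝⁿ is locally star-shaped at every one of its points, then S is convex. -/
theorem stmt_6 {n : ℕ} (S : Set (EuclideanSpace ℝ (Fin n))) (hS : IsClosed S)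
    (hstar : ∀ x₀ ∈ S, ∀ x ∈ S, ∃ a : ℝ, a ∈ Set.Ioc (0 : ℝ) 1 ∧
      ∀ l : ℝ, l ∈ Set.Ioo (0 : ℝ) a → x₀ + l • (x - x₀) ∈ S) :
    Convex ℝ S := by
  -- reduce to: for all x y ∈ S, t ∈ [0,1], x + t•(y-x) ∈ S
  have key : ∀ x ∈ S, ∀ y ∈ S, ∀ t ∈ Set.Icc (0:ℝ) 1, x + t • (y - x) ∈ S := by
    intro x hx y hy
    set f : ℝ → EuclideanSpace ℝ (Fin n) := fun t => x + t • (y - x) with hf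
    have hfc : Continuous f := by
      apply Continuous.add continuous_const
      exact (continuous_id.smul continuous_const)
    set T : Set ℝ := Set.Icc (0:ℝ) 1 ∩ f ⁻¹' S with hT
    have hTc : IsClosed T := isClosed_Icc.inter (hS.preimage hfc)
    have h0 : (0:ℝ) ∈ T := by
      constructor
      · exact Set.left_mem_Icc.2 zero_le_one
      · simpa [hf] using hx
    have h1 : (1:ℝ) ∈ T := by
      constructor
      · exact Set.right_mem_Icc.2 zero_le_one
      · simpa [hf] using hy
    by_contra hcon
    push_neg at hcon
    obtain ⟨t₀, ht₀I, ht₀⟩ := hcon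
    have ht₀T : t₀ ∉ T := fun h => ht₀ h.2
    set A : Set ℝ := T ∩ Set.Icc 0 t₀ with hA
    set B : Set ℝ := T ∩ Set.Icc t₀ 1 with hB
    have hAc : IsCompact A := (isCompact_Icc.inter_left hTc)
    have hBc : IsCompact B := (isCompact_Icc.inter_left hTc)
    have hAne : A.Nonempty := ⟨0, h0, le_refl 0, ht₀I.1⟩
    have hBne : B.Nonempty := ⟨1, h1, ht₀I.2, le_refl 1⟩
    set a := sSup A with ha
    set b := sInf B with hb
    have haA : a ∈ A := hAc.sSup_mem hAne
    have hbB : b ∈ B := hBc.sInf_mem hBne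
    have hat : a < t₀ := lt_of_le_of_ne haA.2.2 (fun h => ht₀T (h ▸ haA.1))
    have htb : t₀ < b := lt_of_le_of_ne (hbB.2.1) (fun h => ht₀T (h ▸ hbB.1))
    -- gap: no element of T strictly between a and b
    have gap : ∀ t ∈ T, t ≤ a ∨ b ≤ t := by
      intro t ht
      rcases le_total t t₀ with h | h
      · left
        exact le_csSup hAc.bddAbove ⟨ht, ht.1.1, h⟩
      · right
        exact csInf_le hBc.bddBelow ⟨ht, h, ht.1.2⟩
    -- apply local star-shapedness at f a towards f b
    obtain ⟨ε, hε, hεS⟩ := hstar (f a) haA.1.2 (f b) hbB.1.2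
    set l : ℝ := ε / 2 with hl
    have hl0 : 0 < l := by have := hε.1; positivity
    have hlε : l < ε := by linarith [hε.1]
    have hl1 : l < 1 := by linarith [hε.2]
    set t : ℝ := a + l * (b - a) with htdef
    have hab : a < b := hat.trans htb
    have hta : a < t := by nlinarith
    have htb' : t < b := by nlinarith
    have hmem : f a + l • (f b - f a) = f t := by
      simp only [hf]
      module
    have hfT : f t ∈ S := by
      rw [← hmem]
      exact hεS l ⟨hl0, hlε⟩
    have htT : t ∈ T := by
      refine ⟨⟨?_, ?_⟩, hfT⟩
      · exact le_trans haA.1.1.1 hta.le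
      · exact le_trans htb'.le hbB.1.1.2
    rcases gap t htT with h | h
    · linarith
    · linarith
  intro x hx y hy p q hp hq hpq
  have : p • x + q • y = x + q • (y - x) := by
    have hp1 : p = 1 - q := by linarith
    rw [hp1]; module
  rw [this]
  exact key x hx y hy q ⟨hq, by linarith⟩
end

section
/- If S ⊆ ℝⁿ is locally star-shaped at x̌ ∈ S, then the contingent cone to S at x̌ equals the closure of the cone of weak feasible directions: T(S, x̌) = cl W(S, x̌). -/
open Filter Topology

def weakFeasibleCone {n : ℕ} (S : Set (EuclideanSpace ℝ (Fin n)))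
    (x : EuclideanSpace ℝ (Fin n)) : Set (EuclideanSpace ℝ (Fin n)) :=
  {u | ∃ t : ℕ → ℝ, (∀ k, 0 < t k) ∧ Tendsto t atTop (𝓝 0) ∧ ∀ k, x + t k • u ∈ S}

def contingentCone {n : ℕ} (S : Set (EuclideanSpace ℝ (Fin n)))
    (x : EuclideanSpace ℝ (Fin n)) : Set (EuclideanSpace ℝ (Fin n)) :=
  {u | ∃ t : ℕ → ℝ, ∃ v : ℕ → EuclideanSpace ℝ (Fin n),
    (∀ k, 0 < t k) ∧ Tendsto t atTop (𝓝 0) ∧ Tendsto v atTop (𝓝 u) ∧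
    ∀ k, x + t k • v k ∈ S}

theorem stmt_9 {n : ℕ} (S : Set (EuclideanSpace ℝ (Fin n)))
    (x₀ : EuclideanSpace ℝ (Fin n)) (hx₀ : x₀ ∈ S)
    (hstar : ∀ x ∈ S, ∃ a : ℝ, a ∈ Set.Ioc (0 : ℝ) 1 ∧
      ∀ l : ℝ, l ∈ Set.Ioo (0 : ℝ) a → x₀ + l • (x - x₀) ∈ S) :
    contingentCone S x₀ = closure (weakFeasibleCone S x₀) := by
  apply Set.Subset.antisymm
  · -- contingent ⊆ closure weak
    rintro u ⟨t, v, ht0, htl, hvl, hS⟩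
    have hvW : ∀ k, v k ∈ weakFeasibleCone S x₀ := by
      intro k
      obtain ⟨a, ⟨ha0, ha1⟩, ha⟩ := hstar (x₀ + t k • v k) (hS k)
      refine ⟨fun j => (a / (j + 2)) * t k, ?_, ?_, ?_⟩
      · intro j
        have : (0:ℝ) < (j:ℝ) + 2 := by positivity
        exact mul_pos (div_pos ha0 this) (ht0 k)
      · have h1 : Tendsto (fun j : ℕ => (a / (j + 2))) atTop (𝓝 0) := by
          have := (tendsto_one_div_add_atTop_nhds_zero_nat : Tendsto (fun n : ℕ => 1 / ((n:ℝ) + 1)) atTop (𝓝 0))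
          have h2 : Tendsto (fun j : ℕ => a * (1 / ((j:ℝ) + 2))) atTop (𝓝 (a * 0)) := by
            apply Tendsto.const_mul
            have : Tendsto (fun j : ℕ => ((j:ℝ) + 2)) atTop atTop := by
              apply tendsto_atTop_add_const_right
              exact tendsto_natCast_atTop_atTop
            simpa [one_div, Function.comp_def] using Tendsto.comp tendsto_inv_atTop_zero this
          simpa [div_eq_mul_inv] using h2
        have := h1.mul_const (t k)
        simpa using this
      · intro j
        have hjl : a / ((j:ℝ) + 2) ∈ Set.Ioo (0:ℝ) a := by
          constructor
          · positivity
          · rw [div_lt_iff₀ (by positivity)]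
            nlinarith [ha0]
        have := ha _ hjl
        have heq : x₀ + (a / (↑j + 2)) • (x₀ + t k • v k - x₀) =
            x₀ + (a / (↑j + 2) * t k) • v k := by
          rw [add_sub_cancel_left, smul_smul]
        rwa [heq] at this
    exact mem_closure_of_tendsto hvl (Eventually.of_forall hvW)
  · -- closure weak ⊆ contingent
    intro u hu
    obtain ⟨w, hwW, hwl⟩ := mem_closure_iff_seq_limit.mp hu
    have key : ∀ m : ℕ, ∃ s : ℝ, 0 < s ∧ s < 1 / (m + 1) ∧ x₀ + s • w m ∈ S := by
      intro m
      obtain ⟨t, ht0, htl, htS⟩ := hwW m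
      have hpos : (0:ℝ) < 1 / (m + 1) := by positivity
      obtain ⟨k, hk⟩ := (htl.eventually (gt_mem_nhds hpos)).exists
      exact ⟨t k, ht0 k, hk, htS k⟩
    choose s hs0 hslt hsS using key
    refine ⟨s, w, hs0, ?_, hwl, hsS⟩
    have h1 : Tendsto (fun m : ℕ => 1 / ((m:ℝ) + 1)) atTop (𝓝 0) :=
      tendsto_one_div_add_atTop_nhds_zero_nat
    exact squeeze_zero (fun m => (hs0 m).le) (fun m => (hslt m).le) h1
end

section
/- Let S ⊆ ℝⁿ (S ≠ ℝⁿ) be a closed convex cone with nonempty interior, and define Δ_S(x) = −d(x, ℝⁿ \ S) if x ∈ S and Δ_S(x) = d(x, S) otherwise. Then Δ_S is a convex function on ℝⁿ. -/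
open Classical in
noncomputable def signedDist' {n : ℕ} (S : Set (EuclideanSpace ℝ (Fin n)))
    (x : EuclideanSpace ℝ (Fin n)) : ℝ :=
  if x ∈ S then -(Metric.infDist x Sᶜ) else Metric.infDist x S

open Metric RealInnerProductSpace

/-- Separation: for a point outside a closed convex cone, there is a unit vector in the
polar cone whose inner product with the point equals the distance to the cone. -/
lemma signedDist_exists_dual {n : ℕ} {S : Set (EuclideanSpace ℝ (Fin n))}
    (hclosed : IsClosed S) (hconv : Convex ℝ S)
    (hcone : ∀ t : ℝ, 0 ≤ t → ∀ x ∈ S, t • x ∈ S)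
    (hS0 : (0 : EuclideanSpace ℝ (Fin n)) ∈ S)
    {c : EuclideanSpace ℝ (Fin n)} (hc : c ∉ S) :
    ∃ u : EuclideanSpace ℝ (Fin n), ‖u‖ = 1 ∧ (∀ s ∈ S, ⟪u, s⟫ ≤ 0) ∧
      ⟪u, c⟫ = infDist c S := by
  obtain ⟨p, hp, hdp⟩ := hclosed.exists_infDist_eq_dist ⟨0, hS0⟩ c
  have hcp : c ≠ p := fun h => hc (h ▸ hp)
  have hnorm : (0:ℝ) < ‖c - p‖ := by
    rwa [norm_pos_iff, sub_ne_zero]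
  -- variational inequality
  have hiInf : ‖c - p‖ = ⨅ w : S, ‖c - w‖ := by
    rw [← dist_eq_norm, ← hdp, infDist_eq_iInf]
    exact iInf_congr fun w => dist_eq_norm c w
  have hvar : ∀ s ∈ S, ⟪c - p, s - p⟫ ≤ 0 :=
    (norm_eq_iInf_iff_real_inner_le_zero hconv hp).mp hiInf
  have hpp : ⟪c - p, p⟫ = 0 := by
    have h1 : ⟪c - p, (0:EuclideanSpace ℝ (Fin n)) - p⟫ ≤ 0 := hvar 0 hS0
    have h2 : ⟪c - p, (2:ℝ) • p - p⟫ ≤ 0 := hvar _ (hcone 2 (by norm_num) p hp)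
    have e1 : ((0:EuclideanSpace ℝ (Fin n)) - p) = -p := by simp
    have e2 : ((2:ℝ) • p - p) = p := by
      rw [two_smul]; abel
    rw [e1, inner_neg_right, neg_nonpos] at h1
    rw [e2] at h2
    linarith
  have hpolar : ∀ s ∈ S, ⟪c - p, s⟫ ≤ 0 := by
    intro s hs
    have := hvar s hs
    rw [inner_sub_right] at this
    linarith [this, hpp]
  refine ⟨‖c - p‖⁻¹ • (c - p), ?_, ?_, ?_⟩
  · rw [norm_smul, norm_inv, norm_norm, inv_mul_cancel₀ hnorm.ne']
  · intro s hs
    rw [real_inner_smul_left]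
    exact mul_nonpos_of_nonneg_of_nonpos (inv_nonneg.mpr hnorm.le) (hpolar s hs)
  · rw [real_inner_smul_left]
    have : ⟪c - p, c⟫ = ‖c - p‖ ^ 2 := by
      have : c = (c - p) + p := by abel
      nth_rewrite 2 [this]
      rw [inner_add_right, hpp, real_inner_self_eq_norm_sq]
      ring
    rw [this, hdp, dist_eq_norm]
    field_simp

/-- Any polar unit vector gives a lower bound on the signed distance. -/
lemma signedDist_upper {n : ℕ} {S : Set (EuclideanSpace ℝ (Fin n))}
    (hS0 : (0 : EuclideanSpace ℝ (Fin n)) ∈ S)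
    {u : EuclideanSpace ℝ (Fin n)} (hu1 : ‖u‖ = 1) (hup : ∀ s ∈ S, ⟪u, s⟫ ≤ 0)
    (x : EuclideanSpace ℝ (Fin n)) : ⟪u, x⟫ ≤ signedDist' S x := by
  unfold signedDist'
  split_ifs with hx
  · -- x ∈ S : need infDist x Sᶜ ≤ -⟪u,x⟫
    rw [le_neg]
    by_contra h
    push_neg at h
    have hux : ⟪u, x⟫ ≤ 0 := hup x hx
    set r := infDist x Sᶜ with hr
    set t := (-⟪u, x⟫ + r) / 2 with ht
    have ht0 : 0 ≤ t := by rw [ht]; linarith [infDist_nonneg (x := x) (s := Sᶜ)]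
    have htr : t < r := by rw [ht]; linarith
    have hmem : x + t • u ∈ S := by
      by_contra hmem
      have : infDist x Sᶜ ≤ dist x (x + t • u) := infDist_le_dist_of_mem hmem
      rw [dist_eq_norm] at this
      have : r ≤ t := by
        calc r ≤ ‖x - (x + t • u)‖ := this
          _ = ‖t • u‖ := by rw [show x - (x + t • u) = -(t • u) by abel, norm_neg]
          _ = t := by rw [norm_smul, hu1, mul_one, Real.norm_eq_abs, abs_of_nonneg ht0]
      linarith
    have := hup _ hmem
    rw [inner_add_right, real_inner_smul_right, real_inner_self_eq_norm_sq, hu1] at this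
    have : ⟪u, x⟫ + t ≤ 0 := by rw [show (1:ℝ)^2 = 1 by ring] at this; linarith [this]
    rw [ht] at this
    linarith
  · -- x ∉ S : ⟪u,x⟫ ≤ infDist x S
    haveI : Nonempty S := ⟨⟨0, hS0⟩⟩
    rw [infDist_eq_iInf]
    refine le_ciInf fun ⟨s, hs⟩ => ?_
    have : ⟪u, x⟫ = ⟪u, x - s⟫ + ⟪u, s⟫ := by rw [← inner_add_right]; congr 1; abel
    calc ⟪u, x⟫ = ⟪u, x - s⟫ + ⟪u, s⟫ := this
      _ ≤ ‖u‖ * ‖x - s‖ + 0 := add_le_add (real_inner_le_norm u (x - s)) (hup s hs)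
      _ = dist x s := by rw [hu1, one_mul, add_zero, dist_eq_norm]

/-- Approximate attainment of the signed distance by a polar unit vector. -/
lemma signedDist_lower {n : ℕ} {S : Set (EuclideanSpace ℝ (Fin n))}
    (hclosed : IsClosed S) (hconv : Convex ℝ S)
    (hcone : ∀ t : ℝ, 0 ≤ t → ∀ x ∈ S, t • x ∈ S)
    (hS0 : (0 : EuclideanSpace ℝ (Fin n)) ∈ S) (hne : S ≠ Set.univ)
    (x : EuclideanSpace ℝ (Fin n)) {ε : ℝ} (hε : 0 < ε) :
    ∃ u : EuclideanSpace ℝ (Fin n), ‖u‖ = 1 ∧ (∀ s ∈ S, ⟪u, s⟫ ≤ 0) ∧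
      signedDist' S x ≤ ⟪u, x⟫ + ε := by
  by_cases hx : x ∈ S
  · -- pick c ∈ Sᶜ close to x
    have hSc : Sᶜ.Nonempty := by
      rw [Set.nonempty_compl]; exact hne
    have hlt : infDist x Sᶜ < infDist x Sᶜ + ε := by linarith
    obtain ⟨c, hc, hdc⟩ := (infDist_lt_iff hSc).mp hlt
    obtain ⟨u, hu1, hup, huc⟩ := signedDist_exists_dual hclosed hconv hcone hS0 hc
    refine ⟨u, hu1, hup, ?_⟩
    have h1 : ⟪u, x⟫ = ⟪u, c⟫ + ⟪u, x - c⟫ := by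
      rw [← inner_add_right]; congr 1; abel
    have h2 : (0:ℝ) ≤ ⟪u, c⟫ := huc ▸ infDist_nonneg
    have h3 : -‖x - c‖ ≤ ⟪u, x - c⟫ := by
      have := real_inner_le_norm u (c - x)
      rw [hu1, one_mul] at this
      have h4 : ⟪u, c - x⟫ = -⟪u, x - c⟫ := by
        rw [show c - x = -(x - c) by abel, inner_neg_right]
      rw [h4, show ‖c - x‖ = ‖x - c‖ from norm_sub_rev c x] at this
      linarith
    have h5 : ‖x - c‖ = dist x c := (dist_eq_norm x c).symm
    have : -(infDist x Sᶜ + ε) < ⟪u, x⟫ := by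
      rw [h1]
      have := h3
      rw [h5] at this
      linarith
    rw [signedDist', if_pos hx]
    linarith
  · obtain ⟨u, hu1, hup, huc⟩ := signedDist_exists_dual hclosed hconv hcone hS0 hx
    refine ⟨u, hu1, hup, ?_⟩
    rw [signedDist', if_neg hx, ← huc]
    linarith

theorem stmt_11 {n : ℕ} (S : Set (EuclideanSpace ℝ (Fin n)))
    (hclosed : IsClosed S) (hconv : Convex ℝ S)
    (hcone : ∀ t : ℝ, 0 ≤ t → ∀ x ∈ S, t • x ∈ S)
    (hint : (interior S).Nonempty) (hne : S ≠ Set.univ) :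
    ConvexOn ℝ Set.univ (signedDist' S) := by
  have hS0 : (0 : EuclideanSpace ℝ (Fin n)) ∈ S := by
    obtain ⟨x0, hx0⟩ := hint
    have := hcone 0 le_rfl x0 (interior_subset hx0)
    simpa using this
  refine ⟨convex_univ, fun x _ y _ a b ha hb hab => ?_⟩
  refine le_of_forall_pos_le_add fun ε hε => ?_
  obtain ⟨u, hu1, hup, hle⟩ :=
    signedDist_lower hclosed hconv hcone hS0 hne (a • x + b • y) hε
  have hx' := signedDist_upper hS0 hu1 hup x
  have hy' := signedDist_upper hS0 hu1 hup y
  have hinner : ⟪u, a • x + b • y⟫ = a * ⟪u, x⟫ + b * ⟪u, y⟫ := by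
    rw [inner_add_right, real_inner_smul_right, real_inner_smul_right]
  calc signedDist' S (a • x + b • y) ≤ ⟪u, a • x + b • y⟫ + ε := hle
    _ = a * ⟪u, x⟫ + b * ⟪u, y⟫ + ε := by rw [hinner]
    _ ≤ a * signedDist' S x + b * signedDist' S y + ε := by
        have := mul_le_mul_of_nonneg_left hx' ha
        have := mul_le_mul_of_nonneg_left hy' hb
        linarith
end

section
/- Let S ⊆ ℝⁿ (S ≠ ℝⁿ) be a closed convex cone with nonempty interior, and Δ_S defined by Δ_S(x) = −d(x, ℝⁿ \ S) for x ∈ S and Δ_S(x) = d(x, S) otherwise. Then Δ_S is decreasing with respect to the order induced by S: if x − y ∈ S then Δ_S(x) ≤ Δ_S(y). -/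
open Classical in
noncomputable def stmtSignedDist {n : ℕ} (S : Set (EuclideanSpace ℝ (Fin n)))
    (x : EuclideanSpace ℝ (Fin n)) : ℝ :=
  if x ∈ S then -(Metric.infDist x Sᶜ) else Metric.infDist x S

lemma infDist_le_aux {α : Type*} [MetricSpace α] {A B : Set α} {x y : α}
    (hB : B.Nonempty) (h : ∀ b ∈ B, ∃ a ∈ A, dist x a ≤ dist y b) :
    Metric.infDist x A ≤ Metric.infDist y B := by
  by_contra h'
  push_neg at h'
  obtain ⟨b, hb, hlt⟩ := (Metric.infDist_lt_iff hB).1 h'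
  obtain ⟨a, ha, hle⟩ := h b hb
  exact absurd ((Metric.infDist_le_dist_of_mem ha).trans hle) (not_le.2 hlt)

theorem stmt_14 {n : ℕ} (S : Set (EuclideanSpace ℝ (Fin n)))
    (hclosed : IsClosed S) (hconv : Convex ℝ S)
    (hcone : ∀ t : ℝ, 0 ≤ t → ∀ x ∈ S, t • x ∈ S)
    (hint : (interior S).Nonempty) (hne : S ≠ Set.univ) :
    ∀ x y : EuclideanSpace ℝ (Fin n), x - y ∈ S → stmtSignedDist S x ≤ stmtSignedDist S y := by
  have hadd : ∀ a ∈ S, ∀ b ∈ S, a + b ∈ S := by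
    intro a ha b hb
    have h2 : (2 : ℝ) • ((1/2 : ℝ) • a + (1/2 : ℝ) • b) ∈ S := by
      apply hcone 2 (by norm_num)
      exact hconv ha hb (by norm_num) (by norm_num) (by norm_num)
    have : (2 : ℝ) • ((1/2 : ℝ) • a + (1/2 : ℝ) • b) = a + b := by
      rw [smul_add, smul_smul, smul_smul]; norm_num
    rwa [this] at h2
  intro x y hs
  have hxy : x = y + (x - y) := by abel
  by_cases hy : y ∈ S
  · have hx : x ∈ S := by rw [hxy]; exact hadd y hy _ hs
    simp only [stmtSignedDist, if_pos hx, if_pos hy, neg_le_neg_iff]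
    -- need infDist y Sᶜ ≤ infDist x Sᶜ
    have hBne : (Sᶜ : Set _).Nonempty := by
      rw [Set.nonempty_compl]; exact hne
    apply infDist_le_aux hBne
    intro c hc
    refine ⟨c - (x - y), ?_, ?_⟩
    · intro hmem
      exact hc (by simpa using hadd _ hmem _ hs)
    · have : y - (c - (x - y)) = x - c := by abel
      rw [dist_eq_norm, dist_eq_norm, this]
  · by_cases hx : x ∈ S
    · simp only [stmtSignedDist, if_pos hx, if_neg hy]
      exact le_trans (neg_nonpos.2 Metric.infDist_nonneg) Metric.infDist_nonneg
    · simp only [stmtSignedDist, if_neg hx, if_neg hy]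
      have hSne : S.Nonempty := ⟨_, hs⟩
      apply infDist_le_aux hSne
      intro b hb
      refine ⟨b + (x - y), hadd b hb _ hs, ?_⟩
      have : x - (b + (x - y)) = y - b := by abel
      rw [dist_eq_norm, dist_eq_norm, this]
end
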